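/- arXiv:1701.02271 — 3 statements merged into one kernel-verified Lean document; each statement's English description precedes it below -/
import Mathlib

section
/- Let Y_1, …, Y_n be random variables with finite second moments satisfying |Cov(Y_i, Y_j)| ≤ r(|i−j|) for a sequence r with Σ_{m=0}^∞ r(m) = S < ∞, E Y_i = 0, and |Y_i| ≤ K a.s. Then for any ε > 0 and 1 ≤ m ≤ n, P(max_{m ≤ k ≤ n} (1/k)|Σ_{i=1}^k Y_i| > ε) ≤ C/(ε² √m), where C depends only on S and K. -/
open MeasureTheory ProbabilityTheory Finset Filter
open scoped ENNReal

private lemma sum_inv_sq_aux (m : ℕ) (hm : 1 ≤ m) : ∀ N : ℕ,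
    ∑ k ∈ Finset.Icc m (m + N), (1 : ℝ) / (k:ℝ)^2 ≤ 2 / m - 2 / (m + N + 1) := by
  intro N
  induction N with
  | zero =>
    simp only [Nat.add_zero, Finset.Icc_self, Finset.sum_singleton]
    have hm0 : (1:ℝ) ≤ (m:ℝ) := by exact_mod_cast hm
    rw [div_sub_div _ _ (by positivity) (by positivity), div_le_div_iff₀ (by positivity) (by positivity)]
    push_cast
    nlinarith [sq_nonneg ((m:ℝ) - 1)]
  | succ N ih =>
    have h1 : m ≤ m + N + 1 := by omega
    rw [show m + (N+1) = (m + N) + 1 by ring, Finset.sum_Icc_succ_top h1]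
    have hm0 : (1:ℝ) ≤ (m:ℝ) := by exact_mod_cast hm
    have key : (1:ℝ) / ((m+N+1:ℕ):ℝ)^2 ≤ 2 / ((m:ℝ) + N + 1) - 2 / ((m:ℝ) + (N+1) + 1) := by
      push_cast
      rw [div_sub_div _ _ (by positivity) (by positivity), div_le_div_iff₀ (by positivity) (by positivity)]
      nlinarith [hm0, (Nat.cast_nonneg N : (0:ℝ) ≤ N)]
    push_cast at ih key ⊢
    linarith

private lemma sum_inv_sq_le (m N : ℕ) (hm : 1 ≤ m) :
    ∑ k ∈ Finset.Icc m N, (1 : ℝ) / (k:ℝ)^2 ≤ 2 / m := by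
  rcases le_or_gt m N with h | h
  · obtain ⟨d, rfl⟩ := Nat.exists_eq_add_of_le h
    refine (sum_inv_sq_aux m hm d).trans ?_
    have : (0:ℝ) ≤ 2 / ((m:ℝ) + d + 1) := by positivity
    linarith
  · rw [Finset.Icc_eq_empty (by omega)]
    simp
    positivity

private lemma cheb {Ω : Type} [MeasureSpace Ω] (g : Ω → ℝ) (hg : Measurable g)
    (hgi : Integrable (fun ω => g ω ^ 2)) (B a : ℝ) (hB : (∫ ω, g ω ^ 2) ≤ B) (ha : 0 < a) :
    ℙ {ω | a < |g ω|} ≤ ENNReal.ofReal (B / a ^ 2) := by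
  have hsub : {ω | a < |g ω|} ⊆ {ω | ENNReal.ofReal (a^2) ≤ ENNReal.ofReal (g ω ^ 2)} := by
    intro ω hω
    simp only [Set.mem_setOf_eq] at hω ⊢
    apply ENNReal.ofReal_le_ofReal
    calc a^2 ≤ |g ω|^2 := by nlinarith [abs_nonneg (g ω), hω]
    _ = g ω ^ 2 := sq_abs _
  have hmeas : AEMeasurable (fun ω => ENNReal.ofReal (g ω ^ 2)) (ℙ : Measure Ω) :=
    (ENNReal.measurable_ofReal.comp ((hg.pow_const 2))).aemeasurable
  have h1 := mul_meas_ge_le_lintegral₀ hmeas (ENNReal.ofReal (a^2))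
  have h2 : (∫⁻ ω, ENNReal.ofReal (g ω ^ 2) ∂(ℙ : Measure Ω)) = ENNReal.ofReal (∫ ω, g ω ^ 2) := by
    rw [MeasureTheory.ofReal_integral_eq_lintegral_ofReal hgi]
    exact Filter.Eventually.of_forall fun ω => sq_nonneg _
  have ha2 : ENNReal.ofReal (a^2) ≠ 0 := by
    simp [ENNReal.ofReal_eq_zero, not_le]; positivity
  calc ℙ {ω | a < |g ω|} ≤ ℙ {ω | ENNReal.ofReal (a^2) ≤ ENNReal.ofReal (g ω ^ 2)} :=
        measure_mono hsub
    _ ≤ (∫⁻ ω, ENNReal.ofReal (g ω ^ 2) ∂(ℙ : Measure Ω)) / ENNReal.ofReal (a^2) := by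
        rw [ENNReal.le_div_iff_mul_le (Or.inl ha2) (Or.inl ENNReal.ofReal_ne_top)]
        rw [mul_comm]; exact h1
    _ = ENNReal.ofReal (∫ ω, g ω ^ 2) / ENNReal.ofReal (a^2) := by rw [h2]
    _ ≤ ENNReal.ofReal B / ENNReal.ofReal (a^2) := by
        exact ENNReal.div_le_div_right (ENNReal.ofReal_le_ofReal hB) _
    _ = ENNReal.ofReal (B / a^2) := by
        rw [ENNReal.ofReal_div_of_pos (by positivity)]

private lemma moment_bound {Ω : Type} [MeasureSpace Ω] [IsProbabilityMeasure (ℙ : Measure Ω)]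
    (Y : ℕ → Ω → ℝ) (r : ℕ → ℝ) (S : ℝ)
    (hprod : ∀ i j : ℕ, Integrable (fun ω => Y i ω * Y j ω))
    (hcov : ∀ i j : ℕ, |∫ ω, Y i ω * Y j ω| ≤ r ((i - j : ℤ)).natAbs)
    (hrS : ∀ s : Finset ℕ, ∑ d ∈ s, r d ≤ S) (k : ℕ) :
    (∫ ω, (∑ i ∈ Finset.Icc 1 k, Y i ω) ^ 2) ≤ 2 * S * k := by
  have hexp : (∫ ω, (∑ i ∈ Finset.Icc 1 k, Y i ω) ^ 2)
      = ∑ i ∈ Finset.Icc 1 k, ∑ j ∈ Finset.Icc 1 k, ∫ ω, Y i ω * Y j ω := by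
    have : ∀ ω : Ω, (∑ i ∈ Finset.Icc 1 k, Y i ω) ^ 2
        = ∑ i ∈ Finset.Icc 1 k, ∑ j ∈ Finset.Icc 1 k, Y i ω * Y j ω := by
      intro ω; rw [sq, Finset.sum_mul_sum]
    simp_rw [this]
    rw [integral_finset_sum _ (fun i _ => integrable_finset_sum _ (fun j _ => hprod i j))]
    exact Finset.sum_congr rfl fun i _ => integral_finset_sum _ (fun j _ => hprod i j)
  rw [hexp]
  have inner : ∀ i ∈ Finset.Icc 1 k, ∑ j ∈ Finset.Icc 1 k, (∫ ω, Y i ω * Y j ω) ≤ 2 * S := by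
    intro i hi
    rw [Finset.mem_Icc] at hi
    calc ∑ j ∈ Finset.Icc 1 k, (∫ ω, Y i ω * Y j ω)
        ≤ ∑ j ∈ Finset.Icc 1 k, r ((i - j : ℤ)).natAbs :=
          Finset.sum_le_sum fun j _ => (le_abs_self _).trans (hcov i j)
      _ = ∑ j ∈ Finset.Ioc 0 i, r ((i - j : ℤ)).natAbs
          + ∑ j ∈ Finset.Ioc i k, r ((i - j : ℤ)).natAbs := by
          rw [show Finset.Icc 1 k = Finset.Ioc 0 k from (Finset.Icc_add_one_left_eq_Ioc 0 k),
            Finset.sum_Ioc_consecutive _ (Nat.zero_le i) hi.2]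
      _ ≤ S + S := by
          have himg : ∀ s : Finset ℕ, (∀ x ∈ s, ∀ y ∈ s,
              (fun j : ℕ => ((i : ℤ) - (j : ℤ)).natAbs) x
                = (fun j : ℕ => ((i : ℤ) - (j : ℤ)).natAbs) y → x = y) →
              ∑ j ∈ s, r ((i : ℤ) - (j : ℤ)).natAbs ≤ S := by
            intro s hinj
            calc ∑ j ∈ s, r ((i : ℤ) - (j : ℤ)).natAbs
                = ∑ d ∈ s.image (fun j : ℕ => ((i : ℤ) - (j : ℤ)).natAbs), r d :=
                  (Finset.sum_image hinj).symm
              _ ≤ S := hrS _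
          gcongr
          · exact himg _ (by intro x hx y hy hxy; rw [Finset.mem_Ioc] at hx hy; simp at hxy; omega)
          · exact himg _ (by intro x hx y hy hxy; rw [Finset.mem_Ioc] at hx hy; simp at hxy; omega)
      _ = 2 * S := by ring
  calc ∑ i ∈ Finset.Icc 1 k, ∑ j ∈ Finset.Icc 1 k, (∫ ω, Y i ω * Y j ω)
      ≤ ∑ i ∈ Finset.Icc 1 k, 2 * S := Finset.sum_le_sum inner
    _ = 2 * S * k := by
        rw [Finset.sum_const, Nat.card_Icc, nsmul_eq_mul]
        push_cast
        ring

set_option maxHeartbeats 2000000 in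
/-- Hájek–Rényi type inequality: for centered variables bounded by `K` with summable
covariance bound `r` (with sum `S`), there is `C` depending only on `S` and `K` such that
`P(max_{m ≤ k ≤ n} (1/k)|∑_{i=1}^k Y_i| > ε) ≤ C / (ε² √m)`. -/
theorem hajek_renyi_inequality (S K : ℝ) (hS : 0 ≤ S) (hK : 0 ≤ K) :
    ∃ C > 0, ∀ (Ω : Type) [MeasureSpace Ω] [IsProbabilityMeasure (ℙ : Measure Ω)]
      (n : ℕ) (Y : ℕ → Ω → ℝ) (r : ℕ → ℝ),
      (∀ i, Measurable (Y i)) →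
      (∀ i, Integrable (fun ω => (Y i ω) ^ 2)) →
      (∀ i, (∫ ω, Y i ω) = 0) →
      (∀ i, ∀ᵐ ω ∂(ℙ : Measure Ω), |Y i ω| ≤ K) →
      (∀ i j : ℕ, |∫ ω, Y i ω * Y j ω| ≤ r ((i - j : ℤ)).natAbs) →
      HasSum r S →
      ∀ ε : ℝ, 0 < ε → ∀ m : ℕ, 1 ≤ m → m ≤ n →
        (ℙ {ω | ∃ k ∈ Finset.Icc m n,
            ε < |∑ i ∈ Finset.Icc 1 k, Y i ω| / k}).toReal
          ≤ C / (ε ^ 2 * Real.sqrt m) := by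
  refine ⟨144*S*K*K + 1, by positivity, ?_⟩
  intro Ω _ _ n Y r hmeas hint hmean hbdd hcov hr ε hε m hm hmn
  set C : ℝ := 144*S*K*K + 1 with hCdef
  have hC1 : (1:ℝ) ≤ C := by
    rw [hCdef]
    nlinarith [mul_nonneg (mul_nonneg (by linarith : (0:ℝ) ≤ 144*S) hK) hK]
  have hC0 : (0:ℝ) < C := lt_of_lt_of_le one_pos hC1
  have hm1 : (1:ℝ) ≤ (m:ℝ) := by exact_mod_cast hm
  have hsm : (1:ℝ) ≤ Real.sqrt m := Real.one_le_sqrt.mpr hm1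
  have hsm0 : (0:ℝ) < Real.sqrt m := lt_of_lt_of_le one_pos hsm
  have hRHS0 : (0:ℝ) < ε^2 * Real.sqrt m := by positivity
  set E := {ω : Ω | ∃ k ∈ Finset.Icc m n,
      ε < |∑ i ∈ Finset.Icc 1 k, Y i ω| / k} with hE
  set G := ⋃ i, {ω : Ω | K < |Y i ω|} with hGdef
  have hG : (ℙ : Measure Ω) G = 0 := by
    rw [hGdef, measure_iUnion_null_iff]
    intro i
    have h := hbdd i
    rw [ae_iff] at h
    simpa [not_le] using h
  -- case ε > K : the event is null
  by_cases hεK : K < ε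
  · have hE0 : (ℙ : Measure Ω) E = 0 := by
      refine measure_mono_null ?_ hG
      intro ω hω
      by_contra hωG
      rw [hGdef] at hωG
      simp only [Set.mem_iUnion, Set.mem_setOf_eq, not_exists, not_lt] at hωG
      obtain ⟨k, hk, hlt⟩ := hω
      rw [Finset.mem_Icc] at hk
      have hk1 : 1 ≤ k := le_trans hm hk.1
      have hk0 : (0:ℝ) < k := by exact_mod_cast hk1
      have h1 : ε * k < |∑ i ∈ Finset.Icc 1 k, Y i ω| := (lt_div_iff₀ hk0).mp hlt
      have h2 : |∑ i ∈ Finset.Icc 1 k, Y i ω| ≤ ∑ i ∈ Finset.Icc 1 k, K :=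
        (Finset.abs_sum_le_sum_abs _ _).trans (Finset.sum_le_sum fun i _ => hωG i)
      rw [Finset.sum_const, Nat.card_Icc, nsmul_eq_mul] at h2
      have h3 : ((k + 1 - 1 : ℕ) : ℝ) = (k : ℝ) := by push_cast [Nat.add_sub_cancel]; ring
      rw [h3] at h2
      nlinarith
    rw [hE0]
    simp only [ENNReal.toReal_zero]
    positivity
  push_neg at hεK
  have hK0 : (0:ℝ) < K := lt_of_lt_of_le hε hεK
  -- infrastructure
  have hprod : ∀ i j : ℕ, Integrable (fun ω => Y i ω * Y j ω) (ℙ : Measure Ω) := by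
    intro i j
    refine Integrable.mono' (integrable_const (K*K))
      ((hmeas i).mul (hmeas j)).aestronglyMeasurable ?_
    filter_upwards [hbdd i, hbdd j] with ω h1 h2
    rw [Real.norm_eq_abs, abs_mul]
    exact mul_le_mul h1 h2 (abs_nonneg _) hK
  have hrpos : ∀ d, 0 ≤ r d := fun d => (abs_nonneg _).trans (by simpa using hcov d 0)
  have hrS : ∀ s : Finset ℕ, ∑ d ∈ s, r d ≤ S := fun s =>
    sum_le_hasSum s (fun d _ => hrpos d) hr
  have hPmeas : ∀ k : ℕ, Measurable (fun ω => ∑ i ∈ Finset.Icc 1 k, Y i ω) :=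
    fun k => Finset.measurable_sum _ fun i _ => hmeas i
  have hPint : ∀ k : ℕ, Integrable (fun ω => (∑ i ∈ Finset.Icc 1 k, Y i ω)^2) (ℙ : Measure Ω) := by
    intro k
    have hrw : (fun ω => (∑ i ∈ Finset.Icc 1 k, Y i ω)^2)
        = fun ω => ∑ i ∈ Finset.Icc 1 k, ∑ j ∈ Finset.Icc 1 k, Y i ω * Y j ω := by
      funext ω; rw [sq, Finset.sum_mul_sum]
    rw [hrw]
    exact integrable_finset_sum _ fun i _ => integrable_finset_sum _ fun j _ => hprod i j
  have hmom := moment_bound Y r S hprod hcov hrS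
  set A : ℕ → Set Ω := fun k => {ω | ε * k / 3 < |∑ i ∈ Finset.Icc 1 k, Y i ω|} with hA
  have hAmeas : ∀ k, MeasurableSet (A k) := fun k =>
    measurableSet_lt measurable_const (hPmeas k).abs
  have hAbound : ∀ k : ℕ, 1 ≤ k → (ℙ : Measure Ω) (A k) ≤ ENNReal.ofReal (18*S/(ε^2*k)) := by
    intro k hk
    have hk0 : (0:ℝ) < k := by exact_mod_cast hk
    refine (cheb _ (hPmeas k) (hPint k) (2*S*k) (ε*k/3) (hmom k) (by positivity)).trans ?_
    apply ENNReal.ofReal_le_ofReal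
    have heq : 2*S*(k:ℝ)/((ε*k/3)^2) = 18*S/(ε^2*k) := by
      field_simp
      ring
    rw [heq]
  set f : Ω → ℝ≥0∞ := fun ω => ∑ k ∈ Finset.Icc m (2*n),
    (A k).indicator (fun _ => ENNReal.ofReal (1/(k:ℝ))) ω with hf
  have hfmeas : Measurable f :=
    Finset.measurable_sum _ fun k _ => Measurable.indicator measurable_const (hAmeas k)
  have hintf : (∫⁻ ω, f ω ∂(ℙ : Measure Ω)) ≤ ENNReal.ofReal (36*S/(ε^2*m)) := by
    rw [hf]
    rw [lintegral_finset_sum _ (fun k _ => Measurable.indicator measurable_const (hAmeas k))]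
    calc ∑ k ∈ Finset.Icc m (2*n), ∫⁻ ω, (A k).indicator (fun _ => ENNReal.ofReal (1/(k:ℝ))) ω ∂(ℙ : Measure Ω)
        = ∑ k ∈ Finset.Icc m (2*n), ENNReal.ofReal (1/(k:ℝ)) * (ℙ : Measure Ω) (A k) := by
          exact Finset.sum_congr rfl fun k _ => lintegral_indicator_const (hAmeas k) _
      _ ≤ ∑ k ∈ Finset.Icc m (2*n), ENNReal.ofReal ((1/(k:ℝ)) * (18*S/(ε^2*k))) := by
          refine Finset.sum_le_sum fun k hk => ?_
          rw [Finset.mem_Icc] at hk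
          rw [ENNReal.ofReal_mul (by positivity)]
          exact mul_le_mul_right (hAbound k (le_trans hm hk.1)) _
      _ = ENNReal.ofReal (∑ k ∈ Finset.Icc m (2*n), (1/(k:ℝ)) * (18*S/(ε^2*k))) :=
          (ENNReal.ofReal_sum_of_nonneg fun k hk => by positivity).symm
      _ ≤ ENNReal.ofReal (36*S/(ε^2*m)) := by
          apply ENNReal.ofReal_le_ofReal
          have hcongr : ∀ k ∈ Finset.Icc m (2*n),
              (1/(k:ℝ)) * (18*S/(ε^2*k)) = (18*S/ε^2) * ((1:ℝ)/(k:ℝ)^2) := by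
            intro k hk
            rw [Finset.mem_Icc] at hk
            have hk0 : (0:ℝ) < k := by
              have : 1 ≤ k := le_trans hm hk.1
              exact_mod_cast this
            ring
          rw [Finset.sum_congr rfl hcongr, ← Finset.mul_sum]
          calc (18*S/ε^2) * ∑ k ∈ Finset.Icc m (2*n), (1:ℝ)/(k:ℝ)^2
              ≤ (18*S/ε^2) * (2/(m:ℝ)) :=
                mul_le_mul_of_nonneg_left (sum_inv_sq_le m (2*n) hm) (by positivity)
            _ = 36*S/(ε^2*m) := by
                field_simp
                ring
  -- pointwise: on E (minus the null set) f is at least ε/(4K)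
  have hkey : E \ G ⊆ {ω | ENNReal.ofReal (ε/(4*K)) ≤ f ω} := by
    rintro ω ⟨hωE, hωG⟩
    rw [hGdef] at hωG
    simp only [Set.mem_iUnion, Set.mem_setOf_eq, not_exists, not_lt] at hωG
    obtain ⟨k, hk, hlt⟩ := hωE
    rw [Finset.mem_Icc] at hk
    have hk1 : 1 ≤ k := le_trans hm hk.1
    have hk0 : (0:ℝ) < k := by exact_mod_cast hk1
    have hSk : ε * k < |∑ i ∈ Finset.Icc 1 k, Y i ω| := (lt_div_iff₀ hk0).mp hlt
    set T := ⌊ε*k/(2*K)⌋₊ with hT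
    have hx0 : (0:ℝ) ≤ ε*k/(2*K) := by positivity
    have hT1 : (T:ℝ) ≤ ε*k/(2*K) := Nat.floor_le hx0
    have hT2 : ε*k/(2*K) < (T:ℝ) + 1 := Nat.lt_floor_add_one _
    have hhalf : ε*k/(2*K) ≤ (k:ℝ)/2 := by
      rw [div_le_div_iff₀ (by positivity) (by norm_num)]
      nlinarith
    have hTk : T ≤ k := by
      have h1 : (T:ℝ) ≤ (k:ℝ) := hT1.trans (hhalf.trans (by linarith))
      exact_mod_cast h1
    have hmem : ∀ k' ∈ Finset.Icc k (k+T), ω ∈ A k' := by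
      intro k' hk'
      rw [Finset.mem_Icc] at hk'
      have hdec : ∑ i ∈ Finset.Icc 1 k, Y i ω + ∑ i ∈ Finset.Ioc k k', Y i ω
          = ∑ i ∈ Finset.Icc 1 k', Y i ω := by
        rw [show Finset.Icc 1 k = Finset.Ioc 0 k from Finset.Icc_add_one_left_eq_Ioc 0 k,
            show Finset.Icc 1 k' = Finset.Ioc 0 k' from Finset.Icc_add_one_left_eq_Ioc 0 k']
        exact Finset.sum_Ioc_consecutive _ (Nat.zero_le k) hk'.1
      have htail : |∑ i ∈ Finset.Ioc k k', Y i ω| ≤ (T:ℝ) * K := by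
        calc |∑ i ∈ Finset.Ioc k k', Y i ω| ≤ ∑ i ∈ Finset.Ioc k k', |Y i ω| :=
              Finset.abs_sum_le_sum_abs _ _
          _ ≤ ∑ i ∈ Finset.Ioc k k', K := Finset.sum_le_sum fun i _ => hωG i
          _ = ((k' - k : ℕ):ℝ) * K := by rw [Finset.sum_const, Nat.card_Ioc, nsmul_eq_mul]
          _ ≤ (T:ℝ) * K := by
              have h5 : k' - k ≤ T := by omega
              have h6 : ((k' - k : ℕ):ℝ) ≤ (T:ℝ) := by exact_mod_cast h5
              nlinarith
      have hTK : (T:ℝ) * K ≤ ε * k / 2 := by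
        have h7 : (T:ℝ) * K ≤ (ε*k/(2*K)) * K := mul_le_mul_of_nonneg_right hT1 hK
        have h8 : (ε*k/(2*K)) * K = ε*k/2 := by
          field_simp
        linarith
      have hlow : ε * k / 2 < |∑ i ∈ Finset.Icc 1 k', Y i ω| := by
        have h9 : |∑ i ∈ Finset.Icc 1 k, Y i ω|
            ≤ |∑ i ∈ Finset.Icc 1 k', Y i ω| + |∑ i ∈ Finset.Ioc k k', Y i ω| := by
          have h10 : ∑ i ∈ Finset.Icc 1 k, Y i ω
              = (∑ i ∈ Finset.Icc 1 k', Y i ω) - ∑ i ∈ Finset.Ioc k k', Y i ω := by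
            rw [← hdec]; ring
          rw [h10]
          exact abs_sub _ _
        linarith
      have hk'le : (k':ℝ) ≤ 3*(k:ℝ)/2 := by
        have h11 : (k':ℝ) ≤ (k:ℝ) + (T:ℝ) := by exact_mod_cast hk'.2
        linarith
      show ε * k' / 3 < |∑ i ∈ Finset.Icc 1 k', Y i ω|
      calc ε * k' / 3 ≤ ε * (3*(k:ℝ)/2) / 3 := by
            apply div_le_div_of_nonneg_right ?_ (by norm_num)
            exact mul_le_mul_of_nonneg_left hk'le (le_of_lt hε)
        _ = ε * k / 2 := by ring
        _ < _ := hlow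
    have hsubs : Finset.Icc k (k+T) ⊆ Finset.Icc m (2*n) := by
      intro k' hk'
      rw [Finset.mem_Icc] at hk' ⊢
      omega
    simp only [Set.mem_setOf_eq]
    calc ENNReal.ofReal (ε/(4*K)) ≤ ENNReal.ofReal (((T:ℝ)+1) * (1/(2*(k:ℝ)))) := by
          apply ENNReal.ofReal_le_ofReal
          have h12 : ε/(4*K) = (ε*k/(2*K)) * (1/(2*(k:ℝ))) := by
            field_simp
            ring
          rw [h12]
          exact mul_le_mul_of_nonneg_right (le_of_lt hT2) (by positivity)
      _ = ((T+1 : ℕ) : ℝ≥0∞) * ENNReal.ofReal (1/(2*(k:ℝ))) := by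
          rw [ENNReal.ofReal_mul (by positivity), ← ENNReal.ofReal_natCast (T+1)]
          push_cast
          ring_nf
      _ = ∑ _k' ∈ Finset.Icc k (k+T), ENNReal.ofReal (1/(2*(k:ℝ))) := by
          rw [Finset.sum_const, Nat.card_Icc, nsmul_eq_mul]
          congr 1
          norm_cast
          omega
      _ ≤ ∑ k' ∈ Finset.Icc k (k+T),
            (A k').indicator (fun _ => ENNReal.ofReal (1/(k':ℝ))) ω := by
          refine Finset.sum_le_sum fun k' hk' => ?_
          rw [Set.indicator_of_mem (hmem k' hk')]
          apply ENNReal.ofReal_le_ofReal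
          rw [Finset.mem_Icc] at hk'
          have hk'0 : (0:ℝ) < k' := by
            have : 1 ≤ k' := le_trans hk1 hk'.1
            exact_mod_cast this
          have h13 : (k':ℝ) ≤ 2*(k:ℝ) := by
            have h14 : (k':ℝ) ≤ (k:ℝ) + (T:ℝ) := by exact_mod_cast hk'.2
            have h15 : (T:ℝ) ≤ (k:ℝ) := by exact_mod_cast hTk
            linarith
          rw [div_le_div_iff₀ (by positivity) hk'0]
          nlinarith
      _ ≤ f ω := by
          rw [hf]
          exact Finset.sum_le_sum_of_subset hsubs
  -- assemble
  have hmain : (ℙ : Measure Ω) E ≤ ENNReal.ofReal (144*S*K/(ε^3*m)) := by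
    have hsplit : (ℙ : Measure Ω) E ≤ (ℙ : Measure Ω) (E \ G) + (ℙ : Measure Ω) G := by
      refine le_trans (measure_mono ?_) (measure_union_le _ _)
      intro ω hω
      by_cases hωG : ω ∈ G
      · exact Or.inr hωG
      · exact Or.inl ⟨hω, hωG⟩
    rw [hG, add_zero] at hsplit
    have hc0 : (0:ℝ) < ε/(4*K) := by positivity
    have hne : ENNReal.ofReal (ε/(4*K)) ≠ 0 := by
      simp only [ne_eq, ENNReal.ofReal_eq_zero, not_le]
      exact hc0
    have hmark := mul_meas_ge_le_lintegral₀ (μ := (ℙ : Measure Ω)) hfmeas.aemeasurable (ENNReal.ofReal (ε/(4*K)))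
    have h16 : (ℙ : Measure Ω) (E \ G)
        ≤ (∫⁻ ω, f ω ∂(ℙ : Measure Ω)) / ENNReal.ofReal (ε/(4*K)) := by
      refine le_trans (measure_mono hkey) ?_
      rw [ENNReal.le_div_iff_mul_le (Or.inl hne) (Or.inl ENNReal.ofReal_ne_top), mul_comm]
      exact hmark
    calc (ℙ : Measure Ω) E ≤ (∫⁻ ω, f ω ∂(ℙ : Measure Ω)) / ENNReal.ofReal (ε/(4*K)) :=
          hsplit.trans h16
      _ ≤ ENNReal.ofReal (36*S/(ε^2*m)) / ENNReal.ofReal (ε/(4*K)) :=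
          ENNReal.div_le_div_right hintf _
      _ = ENNReal.ofReal ((36*S/(ε^2*m)) / (ε/(4*K))) := by
          rw [ENNReal.ofReal_div_of_pos hc0]
      _ = ENNReal.ofReal (144*S*K/(ε^3*m)) := by
          congr 1
          field_simp
          ring
  have hfinal : ((ℙ : Measure Ω) E).toReal ≤ 144*S*K/(ε^3*(m:ℝ)) :=
    ENNReal.toReal_le_of_le_ofReal (by positivity) hmain
  by_cases hcase : ε^2 * Real.sqrt m ≤ C
  · have h17 : ((ℙ : Measure Ω) E).toReal ≤ 1 := by
      refine ENNReal.toReal_le_of_le_ofReal one_pos.le ?_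
      simpa using (prob_le_one : (ℙ : Measure Ω) E ≤ 1)
    have h18 : (1:ℝ) ≤ C / (ε^2*Real.sqrt m) := (one_le_div hRHS0).mpr hcase
    linarith
  · push_neg at hcase
    refine hfinal.trans ?_
    set s := Real.sqrt m with hs
    have hss : s * s = (m:ℝ) := Real.mul_self_sqrt (by positivity)
    have hCK : 144*S*K*K ≤ C*C := by
      have h19 : 144*S*K*K + 1 ≤ C := le_of_eq hCdef.symm
      nlinarith [mul_nonneg (mul_nonneg (by linarith : (0:ℝ) ≤ 144*S) hK) hK]
    have h20 : C < ε * K * s := by nlinarith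
    have h21 : 144*S*K ≤ C*(ε*s) := by nlinarith [mul_pos hε hsm0]
    rw [div_le_div_iff₀ (by positivity) (by positivity), ← hss]
    nlinarith [mul_le_mul_of_nonneg_right h21 (show (0:ℝ) ≤ ε^2*s by positivity)]
end

section
/- (Kokoszka–Leipus Hájek–Rényi type inequality) Let X_1,…,X_n be random variables with finite second moments and c_1,…,c_n nonnegative constants. Then for every ε > 0 and 1 ≤ m ≤ n: ε² P(max_{m≤k≤n} c_k |Σ_{i=1}^k X_i| > ε) ≤ c_m² Σ_{i,j=1}^m E(X_i X_j) + Σ_{k=m}^{n−1} |c_{k+1}² − c_k²| Σ_{i,j=1}^k E(X_i X_j) + 2 Σ_{k=m}^{n−1} c_{k+1}² E(|X_{k+1}| |Σ_{j=1}^k X_j|) + Σ_{k=m}^{n−1} c_{k+1}² E(X_{k+1}²). -/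
open MeasureTheory ProbabilityTheory Finset Filter

/-- Kokoszka–Leipus Hájek–Rényi type inequality for arbitrary square-integrable random
variables `X_1, …, X_n` and nonnegative weights `c_1, …, c_n`. -/
theorem kokoszka_leipus_inequality
    {Ω : Type*} [MeasureSpace Ω] [IsProbabilityMeasure (ℙ : Measure Ω)]
    (n : ℕ) (X : ℕ → Ω → ℝ) (c : ℕ → ℝ)
    (hmeas : ∀ i, Measurable (X i))
    (hL2 : ∀ i, Integrable (fun ω => (X i ω) ^ 2))
    (hc : ∀ i, 0 ≤ c i)
    (m : ℕ) (hm : 1 ≤ m) (hmn : m ≤ n)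
    (ε : ℝ) (hε : 0 < ε) :
    ε ^ 2 * (ℙ {ω | ∃ k ∈ Finset.Icc m n,
        ε < c k * |∑ i ∈ Finset.Icc 1 k, X i ω|}).toReal
      ≤ c m ^ 2 * (∑ i ∈ Finset.Icc 1 m, ∑ j ∈ Finset.Icc 1 m, ∫ ω, X i ω * X j ω)
        + (∑ k ∈ Finset.Icc m (n - 1), |c (k + 1) ^ 2 - c k ^ 2| *
            (∑ i ∈ Finset.Icc 1 k, ∑ j ∈ Finset.Icc 1 k, ∫ ω, X i ω * X j ω))
        + 2 * (∑ k ∈ Finset.Icc m (n - 1), c (k + 1) ^ 2 *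
            ∫ ω, |X (k + 1) ω| * |∑ j ∈ Finset.Icc 1 k, X j ω|)
        + ∑ k ∈ Finset.Icc m (n - 1), c (k + 1) ^ 2 * ∫ ω, (X (k + 1) ω) ^ 2 := by
  set S : ℕ → Ω → ℝ := fun k ω => ∑ i ∈ Finset.Icc 1 k, X i ω with hS
  -- integrability of products
  have hXmeas2 : ∀ i j, Integrable (fun ω => X i ω * X j ω) := by
    intro i j
    refine ((hL2 i).add (hL2 j)).mono
      (((hmeas i).mul (hmeas j)).aestronglyMeasurable) ?_
    filter_upwards with ω
    simp only [Real.norm_eq_abs, Pi.add_apply]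
    rw [abs_mul, abs_of_nonneg (by positivity : (0:ℝ) ≤ X i ω ^ 2 + X j ω ^ 2)]
    nlinarith [sq_abs (X i ω), sq_abs (X j ω), sq_nonneg (|X i ω| - |X j ω|)]
  have hXS : ∀ i k, Integrable (fun ω => X i ω * S k ω) := by
    intro i k
    have h : (fun ω => X i ω * S k ω)
        = fun ω => ∑ j ∈ Finset.Icc 1 k, X i ω * X j ω := by
      funext ω; simp only [hS]; rw [Finset.mul_sum]
    rw [h]; exact integrable_finset_sum _ fun j _ => hXmeas2 i j
  have hSsq : ∀ k, Integrable (fun ω => S k ω ^ 2) := by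
    intro k
    have h : (fun ω => S k ω ^ 2)
        = fun ω => ∑ i ∈ Finset.Icc 1 k, X i ω * S k ω := by
      funext ω; simp only [hS]; rw [← Finset.sum_mul]; ring
    rw [h]; exact integrable_finset_sum _ fun i _ => hXS i k
  have hSsq_int : ∀ k, ∫ ω, S k ω ^ 2
      = ∑ i ∈ Finset.Icc 1 k, ∑ j ∈ Finset.Icc 1 k, ∫ ω, X i ω * X j ω := by
    intro k
    have h : (fun ω => S k ω ^ 2)
        = fun ω => ∑ i ∈ Finset.Icc 1 k, ∑ j ∈ Finset.Icc 1 k, X i ω * X j ω := by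
      funext ω; simp only [hS]; rw [sq, Finset.sum_mul_sum]
    rw [h, integral_finset_sum _ (fun i _ => integrable_finset_sum _ fun j _ => hXmeas2 i j)]
    exact Finset.sum_congr rfl fun i _ => integral_finset_sum _ fun j _ => hXmeas2 i j
  have habsint : ∀ k, Integrable (fun ω => |X (k+1) ω| * |S k ω|) := by
    intro k
    have h : (fun ω => |X (k+1) ω| * |S k ω|) = fun ω => |X (k+1) ω * S k ω| := by
      funext ω; rw [abs_mul]
    rw [h]; exact (hXS (k+1) k).abs
  set T : ℕ → Ω → ℝ := fun k ω =>
    |c (k+1) ^ 2 - c k ^ 2| * S k ω ^ 2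
      + 2 * c (k+1) ^ 2 * (|X (k+1) ω| * |S k ω|)
      + c (k+1) ^ 2 * X (k+1) ω ^ 2 with hT
  have hTnonneg : ∀ k ω, 0 ≤ T k ω := by
    intro k ω; simp only [hT]; positivity
  have hTint : ∀ k, Integrable (T k) := by
    intro k
    exact (((hSsq k).const_mul _).add ((habsint k).const_mul _)).add ((hL2 (k+1)).const_mul _)
  set M : Ω → ℝ := fun ω => c m ^ 2 * S m ω ^ 2 + ∑ k ∈ Finset.Ico m n, T k ω with hM
  have hMint : Integrable M :=
    ((hSsq m).const_mul _).add (integrable_finset_sum _ fun k _ => hTint k)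
  have hMnonneg : ∀ ω, 0 ≤ M ω := by
    intro ω
    exact add_nonneg (by positivity) (Finset.sum_nonneg fun j _ => hTnonneg j ω)
  have key : ∀ ω k, m ≤ k → k ≤ n → c k ^ 2 * S k ω ^ 2 ≤ M ω := by
    intro ω k hk1 hk2
    have main : ∀ k, m ≤ k →
        c k ^ 2 * S k ω ^ 2 ≤ c m ^ 2 * S m ω ^ 2 + ∑ j ∈ Finset.Ico m k, T j ω := by
      intro k hk
      induction k, hk using Nat.le_induction with
      | base => simp
      | succ k hk ih =>
        rw [Finset.sum_Ico_succ_top hk]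
        have hstep : c (k+1) ^ 2 * S (k+1) ω ^ 2 ≤ c k ^ 2 * S k ω ^ 2 + T k ω := by
          have hSk : S (k+1) ω = S k ω + X (k+1) ω := by
            simp only [hS]
            rw [Finset.sum_Icc_succ_top (by omega : 1 ≤ k+1)]
          rw [hSk]
          simp only [hT]
          have h1 : c (k+1) ^ 2 - c k ^ 2 ≤ |c (k+1) ^ 2 - c k ^ 2| := le_abs_self _
          have h2 : X (k+1) ω * S k ω ≤ |X (k+1) ω| * |S k ω| := by
            rw [← abs_mul]; exact le_abs_self _
          nlinarith [mul_le_mul_of_nonneg_right h1 (sq_nonneg (S k ω)),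
            mul_le_mul_of_nonneg_left h2 (sq_nonneg (c (k+1)))]
        linarith
    have h1 := main k hk1
    have h2 : ∑ j ∈ Finset.Ico m k, T j ω ≤ ∑ j ∈ Finset.Ico m n, T j ω :=
      Finset.sum_le_sum_of_subset_of_nonneg (Finset.Ico_subset_Ico le_rfl hk2)
        (fun j _ _ => hTnonneg j ω)
    simp only [hM]
    linarith
  have hsub : {ω | ∃ k ∈ Finset.Icc m n, ε < c k * |S k ω|} ⊆ {ω | ε ^ 2 ≤ M ω} := by
    rintro ω ⟨k, hk, hlt⟩
    simp only [Finset.mem_Icc] at hk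
    have h1 : ε ^ 2 < (c k * |S k ω|) ^ 2 := by
      have := pow_lt_pow_left₀ hlt hε.le (n := 2) (by norm_num)
      exact this
    have h2 : (c k * |S k ω|) ^ 2 = c k ^ 2 * S k ω ^ 2 := by
      rw [mul_pow, sq_abs]
    have h3 := key ω k hk.1 hk.2
    simp only [Set.mem_setOf_eq]
    linarith
  have cheb : ε ^ 2 * (ℙ {ω | ∃ k ∈ Finset.Icc m n, ε < c k * |S k ω|}).toReal
      ≤ ∫ ω, M ω := by
    have h1 := mul_meas_ge_le_integral_of_nonneg (μ := (ℙ : Measure Ω)) (f := M)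
      (ae_of_all _ hMnonneg) hMint (ε ^ 2)
    have h2 : (ℙ {ω | ∃ k ∈ Finset.Icc m n, ε < c k * |S k ω|}).toReal
        ≤ (ℙ {ω | ε ^ 2 ≤ M ω}).toReal :=
      ENNReal.toReal_mono (measure_ne_top _ _) (measure_mono hsub)
    calc ε ^ 2 * (ℙ {ω | ∃ k ∈ Finset.Icc m n, ε < c k * |S k ω|}).toReal
        ≤ ε ^ 2 * (ℙ {ω | ε ^ 2 ≤ M ω}).toReal := by
          exact mul_le_mul_of_nonneg_left h2 (by positivity)
      _ ≤ ∫ ω, M ω := h1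
  have hMval : ∫ ω, M ω
      = c m ^ 2 * (∑ i ∈ Finset.Icc 1 m, ∑ j ∈ Finset.Icc 1 m, ∫ ω, X i ω * X j ω)
        + ∑ k ∈ Finset.Ico m n,
            (|c (k+1) ^ 2 - c k ^ 2| *
              (∑ i ∈ Finset.Icc 1 k, ∑ j ∈ Finset.Icc 1 k, ∫ ω, X i ω * X j ω)
            + 2 * (c (k+1) ^ 2 * ∫ ω, |X (k+1) ω| * |S k ω|)
            + c (k+1) ^ 2 * ∫ ω, X (k+1) ω ^ 2) := by
    simp only [hM]
    have j1 : Integrable (fun ω => c m ^ 2 * S m ω ^ 2) := (hSsq m).const_mul _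
    have j2 : Integrable (fun ω => ∑ k ∈ Finset.Ico m n, T k ω) :=
      integrable_finset_sum _ fun k _ => hTint k
    rw [integral_add j1 j2,
      integral_const_mul, hSsq_int, integral_finset_sum _ fun k _ => hTint k]
    congr 1
    refine Finset.sum_congr rfl fun k _ => ?_
    simp only [hT]
    have i1 : Integrable (fun ω => |c (k+1) ^ 2 - c k ^ 2| * S k ω ^ 2) :=
      (hSsq k).const_mul _
    have i2 : Integrable (fun ω => 2 * c (k+1) ^ 2 * (|X (k+1) ω| * |S k ω|)) :=
      (habsint k).const_mul _
    have i3 : Integrable (fun ω => c (k+1) ^ 2 * X (k+1) ω ^ 2) :=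
      (hL2 (k+1)).const_mul _
    have i12 : Integrable (fun ω => |c (k+1) ^ 2 - c k ^ 2| * S k ω ^ 2
        + 2 * c (k+1) ^ 2 * (|X (k+1) ω| * |S k ω|)) := i1.add i2
    rw [integral_add i12 i3, integral_add i1 i2,
      integral_const_mul, integral_const_mul, integral_const_mul, hSsq_int]
    ring
  have hIcc : Finset.Icc m (n - 1) = Finset.Ico m n := by
    ext x; simp only [Finset.mem_Icc, Finset.mem_Ico]; omega
  calc ε ^ 2 * (ℙ {ω | ∃ k ∈ Finset.Icc m n,
        ε < c k * |∑ i ∈ Finset.Icc 1 k, X i ω|}).toReal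
      ≤ ∫ ω, M ω := cheb
    _ = _ := by
        rw [hMval, hIcc]
        rw [Finset.sum_add_distrib, Finset.sum_add_distrib, ← Finset.mul_sum]
        simp only [hS]
        ring
end

section
/- (Billingsley maximal inequality, Theorem 10.2) Let ξ_1,…,ξ_n be random variables with partial sums S_k = Σ_{i=1}^k ξ_i, S_0 = 0. Suppose there exist α > 1, β > 0 and nonnegative numbers u_1,…,u_n such that P(|S_j − S_i| ≥ λ) ≤ λ^{−β} (Σ_{l=i+1}^j u_l)^α for all λ > 0 and 0 ≤ i ≤ j ≤ n. Then there exists K > 0 depending only on α and β such that for all λ > 0, P(max_{1≤k≤n} |S_k| ≥ λ) ≤ K λ^{−β} (Σ_{l=1}^n u_l)^α. -/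
open MeasureTheory ProbabilityTheory Finset Filter

private lemma bmi_sum_shift (f : ℕ → ℝ) (h m : ℕ) :
    ∑ l ∈ Finset.Icc (h+1) (h+m), f l = ∑ l ∈ Finset.Icc 1 m, f (l+h) := by
  have : Finset.Icc (h+1) (h+m) = (Finset.Icc 1 m).map (addRightEmbedding h) := by
    rw [Finset.map_add_right_Icc]; congr 1 <;> omega
  rw [this, Finset.sum_map]; rfl

private lemma bmi_sum_split (f : ℕ → ℝ) {h m : ℕ} (hm : h ≤ m) :
    ∑ l ∈ Finset.Icc 1 m, f l = ∑ l ∈ Finset.Icc 1 h, f l + ∑ l ∈ Finset.Icc (h+1) m, f l := by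
  rw [Finset.Icc_add_one_left_eq_Ioc, show Finset.Icc 1 m = Finset.Ioc 0 m from Finset.Icc_add_one_left_eq_Ioc (a := 0) (b := m),
    show Finset.Icc 1 h = Finset.Ioc 0 h from Finset.Icc_add_one_left_eq_Ioc (a := 0) (b := h),
    Finset.sum_Ioc_consecutive f (Nat.zero_le h) hm]

private lemma bmi_aux (α β ε K : ℝ) (hα : 1 < α) (hβ : 0 < β)
    (hε0 : 0 < ε) (hε1 : ε < 1) (hK0 : 0 < K)
    (hrec : K * (2:ℝ) ^ (-α) + ε ^ (-β) + K * (1 - ε) ^ (-β) * (2:ℝ) ^ (-α) ≤ K) :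
    ∀ n : ℕ, ∀ (Ω : Type) [MeasureSpace Ω] [IsProbabilityMeasure (ℙ : Measure Ω)]
      (ξ : ℕ → Ω → ℝ) (u : ℕ → ℝ),
      (∀ l, 0 ≤ u l) →
      (∀ lam : ℝ, 0 < lam → ∀ i j : ℕ, i ≤ j → j ≤ n →
        (ℙ {ω | lam ≤ |(∑ l ∈ Finset.Icc 1 j, ξ l ω) - ∑ l ∈ Finset.Icc 1 i, ξ l ω|}).toReal
          ≤ lam ^ (-β) * (∑ l ∈ Finset.Icc (i + 1) j, u l) ^ α) →
      ∀ lam : ℝ, 0 < lam →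
        (ℙ {ω | ∃ k ∈ Finset.Icc 1 n, lam ≤ |∑ l ∈ Finset.Icc 1 k, ξ l ω|}).toReal
          ≤ K * lam ^ (-β) * (∑ l ∈ Finset.Icc 1 n, u l) ^ α := by
  intro n
  induction n using Nat.strong_induction_on with
  | _ n ih =>
  intro Ω _ _ ξ u hu H lam hlam
  classical
  have hIcc10 : Finset.Icc 1 0 = (∅ : Finset ℕ) := Finset.Icc_eq_empty (by omega)
  have hα0 : (0:ℝ) < α := lt_trans one_pos hα
  have hT : (0:ℝ) < lam ^ (-β) := Real.rpow_pos_of_pos hlam _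
  set U : ℝ := ∑ l ∈ Finset.Icc 1 n, u l with hUdef
  have hU0 : 0 ≤ U := Finset.sum_nonneg fun i _ => hu i
  rcases eq_or_lt_of_le hU0 with hU | hU
  · -- total sum is zero: each event is null
    have hzero : ∀ k, k ≤ n → ℙ {ω | lam ≤ |∑ l ∈ Finset.Icc 1 k, ξ l ω|} = 0 := by
      intro k hk
      have hb := H lam hlam 0 k (Nat.zero_le k) hk
      have hz : ∑ l ∈ Finset.Icc (0+1) k, u l = 0 := by
        refine le_antisymm ?_ (Finset.sum_nonneg fun i _ => hu i)
        calc ∑ l ∈ Finset.Icc (0+1) k, u l ≤ U :=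
              Finset.sum_le_sum_of_subset_of_nonneg
                (Finset.Icc_subset_Icc le_rfl hk) (fun i _ _ => hu i)
          _ = 0 := hU.symm
      rw [hz, Real.zero_rpow (ne_of_gt hα0), mul_zero] at hb
      have hset : {ω | lam ≤ |(∑ l ∈ Finset.Icc 1 k, ξ l ω) - ∑ l ∈ Finset.Icc 1 0, ξ l ω|}
          = {ω | lam ≤ |∑ l ∈ Finset.Icc 1 k, ξ l ω|} := by
        ext ω; simp [hIcc10]
      rw [hset] at hb
      have hle0 : (ℙ {ω | lam ≤ |∑ l ∈ Finset.Icc 1 k, ξ l ω|}).toReal = 0 :=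
        le_antisymm hb ENNReal.toReal_nonneg
      rcases (ENNReal.toReal_eq_zero_iff _).mp hle0 with h0 | htop
      · exact h0
      · exact absurd htop (measure_ne_top _ _)
    have hsub : {ω | ∃ k ∈ Finset.Icc 1 n, lam ≤ |∑ l ∈ Finset.Icc 1 k, ξ l ω|}
        ⊆ ⋃ k ∈ Finset.Icc 1 n, {ω | lam ≤ |∑ l ∈ Finset.Icc 1 k, ξ l ω|} := by
      rintro ω ⟨k, hk, hle⟩
      exact Set.mem_biUnion hk hle
    have : ℙ {ω | ∃ k ∈ Finset.Icc 1 n, lam ≤ |∑ l ∈ Finset.Icc 1 k, ξ l ω|} = 0 := by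
      refine le_antisymm ?_ (zero_le)
      calc ℙ _ ≤ ℙ (⋃ k ∈ Finset.Icc 1 n, {ω | lam ≤ |∑ l ∈ Finset.Icc 1 k, ξ l ω|}) :=
            measure_mono hsub
        _ ≤ ∑ k ∈ Finset.Icc 1 n, ℙ {ω | lam ≤ |∑ l ∈ Finset.Icc 1 k, ξ l ω|} :=
            measure_biUnion_finset_le _ _
        _ = 0 := by
            refine Finset.sum_eq_zero fun k hk => hzero k (Finset.mem_Icc.mp hk).2
    rw [this, ← hU, Real.zero_rpow (ne_of_gt hα0), mul_zero]
    simp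
  · -- total sum positive
    have hn1 : 1 ≤ n := by
      rcases Nat.eq_zero_or_pos n with h0 | h
      · exfalso
        have : U = 0 := by rw [hUdef, h0]; simp [hIcc10]
        linarith
      · exact h
    -- the splitting index
    have hex : ∃ k, U/2 ≤ ∑ l ∈ Finset.Icc 1 k, u l := ⟨n, by rw [← hUdef]; linarith⟩
    set h := Nat.find hex with hhdef
    have hph : U/2 ≤ ∑ l ∈ Finset.Icc 1 h, u l := Nat.find_spec hex
    have hhn : h ≤ n := Nat.find_min' hex (by rw [← hUdef]; linarith)
    have hh1 : 1 ≤ h := by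
      rcases Nat.eq_zero_or_pos h with h0 | h; swap; · exact h
      exfalso
      have := hph
      rw [h0] at this
      simp [hIcc10] at this
      linarith
    have hpre : ∑ l ∈ Finset.Icc 1 (h-1), u l ≤ U/2 :=
      le_of_not_ge (Nat.find_min hex (by omega))
    have hsplitu : U = ∑ l ∈ Finset.Icc 1 h, u l + ∑ l ∈ Finset.Icc (h+1) n, u l :=
      bmi_sum_split u hhn
    have hsuf : ∑ l ∈ Finset.Icc (h+1) n, u l ≤ U/2 := by linarith
    -- the three events
    set A := {ω | ∃ k ∈ Finset.Icc 1 n, lam ≤ |∑ l ∈ Finset.Icc 1 k, ξ l ω|} with hA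
    set B := {ω | ∃ k ∈ Finset.Icc 1 (h-1), lam ≤ |∑ l ∈ Finset.Icc 1 k, ξ l ω|} with hB
    set C := {ω | ε*lam ≤ |(∑ l ∈ Finset.Icc 1 h, ξ l ω) - ∑ l ∈ Finset.Icc 1 0, ξ l ω|} with hC
    set D := {ω | ∃ k ∈ Finset.Icc 1 (n-h), (1-ε)*lam ≤ |∑ l ∈ Finset.Icc 1 k, ξ (l+h) ω|} with hD
    have hsub : A ⊆ B ∪ (C ∪ D) := by
      rintro ω ⟨k, hk, hle⟩
      rw [Finset.mem_Icc] at hk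
      by_cases hkh : k ≤ h - 1
      · exact Or.inl ⟨k, Finset.mem_Icc.mpr ⟨hk.1, hkh⟩, hle⟩
      · by_cases hCm : ε*lam ≤ |(∑ l ∈ Finset.Icc 1 h, ξ l ω) - ∑ l ∈ Finset.Icc 1 0, ξ l ω|
        · exact Or.inr (Or.inl hCm)
        · push_neg at hCm
          have hCh : |∑ l ∈ Finset.Icc 1 h, ξ l ω| < ε*lam := by
            have : (∑ l ∈ Finset.Icc 1 0, ξ l ω) = 0 := by simp [hIcc10]
            rwa [this, sub_zero] at hCm
          have hkgt : h + 1 ≤ k := by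
            rcases Nat.lt_or_ge k (h+1) with hlt | hge
            · exfalso
              have hkeqh : k = h := by omega
              rw [hkeqh] at hle
              have : ε * lam < lam := by nlinarith
              linarith
            · exact hge
          refine Or.inr (Or.inr ⟨k - h, Finset.mem_Icc.mpr ⟨by omega, by omega⟩, ?_⟩)
          have hshift : ∑ l ∈ Finset.Icc 1 (k-h), ξ (l+h) ω
              = ∑ l ∈ Finset.Icc (h+1) k, ξ l ω := by
            have hk' : h + (k - h) = k := by omega
            rw [← bmi_sum_shift (fun l => ξ l ω) h (k-h), hk']
          have hsplitS : ∑ l ∈ Finset.Icc 1 k, ξ l ω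
              = ∑ l ∈ Finset.Icc 1 h, ξ l ω + ∑ l ∈ Finset.Icc (h+1) k, ξ l ω :=
            bmi_sum_split (fun l => ξ l ω) (by omega)
          have habs : |∑ l ∈ Finset.Icc 1 k, ξ l ω| - |∑ l ∈ Finset.Icc 1 h, ξ l ω|
              ≤ |(∑ l ∈ Finset.Icc 1 k, ξ l ω) - ∑ l ∈ Finset.Icc 1 h, ξ l ω| :=
            abs_sub_abs_le_abs_sub _ _
          rw [hshift]
          have : (∑ l ∈ Finset.Icc 1 k, ξ l ω) - ∑ l ∈ Finset.Icc 1 h, ξ l ω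
              = ∑ l ∈ Finset.Icc (h+1) k, ξ l ω := by rw [hsplitS]; ring
          rw [this] at habs
          nlinarith
    -- measure subadditivity
    have hmeas : ℙ A ≤ ℙ B + (ℙ C + ℙ D) := by
      calc ℙ A ≤ ℙ (B ∪ (C ∪ D)) := measure_mono hsub
        _ ≤ ℙ B + ℙ (C ∪ D) := measure_union_le _ _
        _ ≤ ℙ B + (ℙ C + ℙ D) := add_le_add_right (measure_union_le _ _) _
    have hto : (ℙ A).toReal ≤ (ℙ B).toReal + ((ℙ C).toReal + (ℙ D).toReal) := by
      have hne : ℙ B + (ℙ C + ℙ D) ≠ ⊤ := by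
        simp [ENNReal.add_ne_top, measure_ne_top]
      have := ENNReal.toReal_mono hne hmeas
      rwa [ENNReal.toReal_add (measure_ne_top _ _) (by simp [ENNReal.add_ne_top, measure_ne_top]),
        ENNReal.toReal_add (measure_ne_top _ _) (measure_ne_top _ _)] at this
    -- bound on B
    have hBb : (ℙ B).toReal ≤ K * lam ^ (-β) * (∑ l ∈ Finset.Icc 1 (h-1), u l) ^ α :=
      ih (h-1) (by omega) Ω ξ u hu
        (fun lam' hlam' i j hij hj => H lam' hlam' i j hij (by omega)) lam hlam
    -- bound on C
    have hCb : (ℙ C).toReal ≤ (ε*lam) ^ (-β) * (∑ l ∈ Finset.Icc (0+1) h, u l) ^ α :=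
      H (ε*lam) (mul_pos hε0 hlam) 0 h (Nat.zero_le h) hhn
    -- bound on D via induction on shifted sequence
    have hH' : ∀ lam' : ℝ, 0 < lam' → ∀ i j : ℕ, i ≤ j → j ≤ n - h →
        (ℙ {ω | lam' ≤ |(∑ l ∈ Finset.Icc 1 j, ξ (l+h) ω) - ∑ l ∈ Finset.Icc 1 i, ξ (l+h) ω|}).toReal
          ≤ lam' ^ (-β) * (∑ l ∈ Finset.Icc (i + 1) j, u (l+h)) ^ α := by
      intro lam' hlam' i j hij hjn
      have key := H lam' hlam' (h+i) (h+j) (by omega) (by omega)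
      have e1 : ∀ ω, (∑ l ∈ Finset.Icc 1 (h+j), ξ l ω) - ∑ l ∈ Finset.Icc 1 (h+i), ξ l ω
          = (∑ l ∈ Finset.Icc 1 j, ξ (l+h) ω) - ∑ l ∈ Finset.Icc 1 i, ξ (l+h) ω := by
        intro ω
        rw [bmi_sum_split (fun l => ξ l ω) (show h ≤ h + j by omega),
          bmi_sum_split (fun l => ξ l ω) (show h ≤ h + i by omega),
          bmi_sum_shift (fun l => ξ l ω) h j, bmi_sum_shift (fun l => ξ l ω) h i]
        ring
      have e2 : ∑ l ∈ Finset.Icc (h+i+1) (h+j), u l = ∑ l ∈ Finset.Icc (i+1) j, u (l+h) := by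
        have h2 : Finset.Icc (h+i+1) (h+j) = (Finset.Icc (i+1) j).map (addRightEmbedding h) := by
          rw [Finset.map_add_right_Icc]; congr 1 <;> omega
        rw [h2, Finset.sum_map]; rfl
      have hset : {ω | lam' ≤ |(∑ l ∈ Finset.Icc 1 (h+j), ξ l ω) - ∑ l ∈ Finset.Icc 1 (h+i), ξ l ω|}
          = {ω | lam' ≤ |(∑ l ∈ Finset.Icc 1 j, ξ (l+h) ω) - ∑ l ∈ Finset.Icc 1 i, ξ (l+h) ω|} := by
        ext ω; rw [Set.mem_setOf_eq, Set.mem_setOf_eq, e1 ω]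
      rw [hset, e2] at key
      exact key
    have hDb : (ℙ D).toReal ≤ K * ((1-ε)*lam) ^ (-β) * (∑ l ∈ Finset.Icc 1 (n-h), u (l+h)) ^ α :=
      ih (n-h) (by omega) Ω (fun l => ξ (l+h)) (fun l => u (l+h)) (fun l => hu _)
        hH' ((1-ε)*lam) (mul_pos (by linarith) hlam)
    -- simplify the three bounds
    have h2pow : ((U/2):ℝ) ^ α = (2:ℝ)^(-α) * U ^ α := by
      rw [div_eq_mul_inv, Real.mul_rpow hU0 (by norm_num),
        Real.inv_rpow (by norm_num), ← Real.rpow_neg (by norm_num)]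
      ring
    have hrpow_mono : ∀ x y : ℝ, 0 ≤ x → x ≤ y → x ^ α ≤ y ^ α :=
      fun x y hx hxy => Real.rpow_le_rpow hx hxy hα0.le
    have hUhalf_nonneg : (0:ℝ) ≤ U/2 := by linarith
    have hB2 : (ℙ B).toReal ≤ K * lam ^ (-β) * ((2:ℝ)^(-α) * U ^ α) := by
      rw [← h2pow]
      refine hBb.trans ?_
      have := hrpow_mono _ _ (Finset.sum_nonneg fun i _ => hu i) hpre
      exact mul_le_mul_of_nonneg_left this (mul_nonneg hK0.le hT.le)
    have hC2 : (ℙ C).toReal ≤ ε ^ (-β) * lam ^ (-β) * U ^ α := by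
      refine hCb.trans ?_
      rw [Real.mul_rpow hε0.le hlam.le]
      have hsum_le : ∑ l ∈ Finset.Icc (0+1) h, u l ≤ U :=
        Finset.sum_le_sum_of_subset_of_nonneg
          (Finset.Icc_subset_Icc le_rfl hhn) (fun i _ _ => hu i)
      have := hrpow_mono _ _ (Finset.sum_nonneg fun i _ => hu i) hsum_le
      have hεβ : (0:ℝ) < ε ^ (-β) := Real.rpow_pos_of_pos hε0 _
      exact mul_le_mul_of_nonneg_left this (mul_nonneg hεβ.le hT.le)
    have hD2 : (ℙ D).toReal ≤ K * (1-ε) ^ (-β) * (2:ℝ)^(-α) * (lam ^ (-β) * U ^ α) := by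
      refine hDb.trans ?_
      have hshiftu : ∑ l ∈ Finset.Icc 1 (n-h), u (l+h) = ∑ l ∈ Finset.Icc (h+1) n, u l := by
        rw [← bmi_sum_shift u h (n-h), show h + (n-h) = n by omega]
      rw [hshiftu, Real.mul_rpow (by linarith) hlam.le]
      have hle := hrpow_mono _ _ (Finset.sum_nonneg fun i _ => hu i) hsuf
      rw [h2pow] at hle
      have h1ε : (0:ℝ) < (1-ε) ^ (-β) := Real.rpow_pos_of_pos (by linarith) _
      calc K * ((1-ε) ^ (-β) * lam ^ (-β)) * (∑ l ∈ Finset.Icc (h+1) n, u l) ^ α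
          ≤ K * ((1-ε) ^ (-β) * lam ^ (-β)) * ((2:ℝ)^(-α) * U ^ α) :=
            mul_le_mul_of_nonneg_left hle
              (mul_nonneg hK0.le (mul_nonneg h1ε.le hT.le))
        _ = K * (1-ε) ^ (-β) * (2:ℝ)^(-α) * (lam ^ (-β) * U ^ α) := by ring
    -- combine
    have hUα : (0:ℝ) ≤ U ^ α := Real.rpow_nonneg hU0 _
    calc (ℙ A).toReal ≤ (ℙ B).toReal + ((ℙ C).toReal + (ℙ D).toReal) := hto
      _ ≤ (K * (2:ℝ)^(-α) + ε ^ (-β) + K * (1-ε) ^ (-β) * (2:ℝ)^(-α)) * (lam ^ (-β) * U ^ α) := by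
          linarith [hB2, hC2, hD2]
      _ ≤ K * (lam ^ (-β) * U ^ α) :=
          mul_le_mul_of_nonneg_right hrec (mul_nonneg hT.le hUα)
      _ = K * lam ^ (-β) * U ^ α := by ring

/-- Billingsley's maximal inequality (Theorem 10.2): if
`P(|S_j - S_i| ≥ λ) ≤ λ^{-β} (∑_{l=i+1}^j u_l)^α` with `α > 1`, `β > 0`, then
`P(max_{1≤k≤n} |S_k| ≥ λ) ≤ K λ^{-β} (∑_{l=1}^n u_l)^α`, with `K` depending only on
`α` and `β`. -/
theorem billingsley_maximal_inequality (α β : ℝ) (hα : 1 < α) (hβ : 0 < β) :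
    ∃ K > 0, ∀ (Ω : Type) [MeasureSpace Ω] [IsProbabilityMeasure (ℙ : Measure Ω)]
      (n : ℕ) (ξ : ℕ → Ω → ℝ) (u : ℕ → ℝ),
      (∀ l, Measurable (ξ l)) →
      (∀ l, 0 ≤ u l) →
      (∀ lam : ℝ, 0 < lam → ∀ i j : ℕ, i ≤ j → j ≤ n →
        (ℙ {ω | lam ≤ |(∑ l ∈ Finset.Icc 1 j, ξ l ω) - ∑ l ∈ Finset.Icc 1 i, ξ l ω|}).toReal
          ≤ lam ^ (-β) * (∑ l ∈ Finset.Icc (i + 1) j, u l) ^ α) →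
      ∀ lam : ℝ, 0 < lam →
        (ℙ {ω | ∃ k ∈ Finset.Icc 1 n, lam ≤ |∑ l ∈ Finset.Icc 1 k, ξ l ω|}).toReal
          ≤ K * lam ^ (-β) * (∑ l ∈ Finset.Icc 1 n, u l) ^ α := by
  have hβ' : β ≠ 0 := ne_of_gt hβ
  set t : ℝ := (2:ℝ) ^ ((1 - α)/β) with ht
  have ht0 : 0 < t := Real.rpow_pos_of_pos (by norm_num) _
  have ht1 : t < 1 :=
    Real.rpow_lt_one_of_one_lt_of_neg (by norm_num) (div_neg_of_neg_of_pos (by linarith) hβ)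
  set ε : ℝ := 1 - t with hε
  have hε0 : 0 < ε := by rw [hε]; linarith
  have hε1 : ε < 1 := by rw [hε]; linarith
  have h1ε : 1 - ε = t := by rw [hε]; ring
  have htβ : (1 - ε) ^ (-β) = (2:ℝ) ^ (α - 1) := by
    rw [h1ε, ht, ← Real.rpow_mul (by norm_num : (0:ℝ) ≤ 2)]
    congr 1
    field_simp
    ring
  have h2half : (2:ℝ) ^ (α - 1) * (2:ℝ) ^ (-α) = 1/2 := by
    rw [← Real.rpow_add (by norm_num : (0:ℝ) < 2), show α - 1 + -α = -1 by ring,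
      Real.rpow_neg_one]
    norm_num
  have h2αlt : (2:ℝ) ^ (-α) < 1/2 := by
    have h := (Real.rpow_lt_rpow_left_iff (x := (2:ℝ)) (by norm_num)).mpr
      (show -α < -1 by linarith)
    rwa [Real.rpow_neg_one, show ((2:ℝ))⁻¹ = 1/2 by norm_num] at h
  have h2α0 : (0:ℝ) < (2:ℝ) ^ (-α) := Real.rpow_pos_of_pos (by norm_num) _
  have hεβ0 : (0:ℝ) < ε ^ (-β) := Real.rpow_pos_of_pos hε0 _
  set K : ℝ := ε ^ (-β) / (1/2 - (2:ℝ) ^ (-α)) with hK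
  have hK0 : 0 < K := div_pos hεβ0 (by linarith)
  have hKeq : ε ^ (-β) = K * (1/2 - (2:ℝ) ^ (-α)) := by
    rw [hK, div_mul_cancel₀ _ (ne_of_gt (by linarith : (0:ℝ) < 1/2 - (2:ℝ) ^ (-α)))]
  have hrec : K * (2:ℝ) ^ (-α) + ε ^ (-β) + K * (1 - ε) ^ (-β) * (2:ℝ) ^ (-α) ≤ K := by
    rw [htβ]
    have h3 : K * (2:ℝ) ^ (α - 1) * (2:ℝ) ^ (-α) = K * (1/2) := by
      rw [mul_assoc, h2half]
    linarith [hKeq, h3]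
  exact ⟨K, hK0, fun Ω _ _ n ξ u _ hu H lam hlam =>
    bmi_aux α β ε K hα hβ hε0 hε1 hK0 hrec n Ω ξ u hu H lam hlam⟩
end
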